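/- Suppose C is a finite family of cycles with a central cycle C_c, satisfying: (i) for each non-central cycle C_j, the set C_j* of non-central cycles intersecting C_j has a common vertex v_j lying on C_j; (ii) distinct 'clusters' C_j* are either equal or consist of pairwise disjoint cycles across clusters. Then the number of distinct clusters equals both the maximum size of a pairwise-disjoint subfamily of C and the minimum size of a vertex set hitting every cycle in C \ {C_c}; moreover removing one vertex of C_c in addition hits every cycle of C, so the minimum hitting set of C has size at most (number of clusters) + 1. -/

import Mathlib

set_option maxHeartbeats 1000000


/-- clustered cycle family with central cycle. The family is indexed by
`Option (Fin n)`: `none` is the central cycle `C_c` and `some j` are the other cycles.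
If every cluster `C_j*` has a common vertex and distinct clusters are pairwise
vertex-disjoint, then the number of distinct clusters `t` equals both the maximum size of
a pairwise-disjoint subfamily of `C` and the minimum size of a vertex set hitting every
non-central cycle; moreover adding one vertex of `C_c` hits every cycle, so a hitting set
of `C` of size at most `t + 1` exists. -/
theorem clustered_duality_with_central
    {V : Type*} [DecidableEq V] {n : ℕ} (hn : 0 < n)
    (D : Fin n → Finset V) (Cc : Finset V)
    (hne : ∀ j, (D j).Nonempty)
    (hCc : ∀ j, (D j ∩ Cc).Nonempty)
    (hstar : ∀ j, ∃ v : V, v ∈ D j ∧ ∀ k, (D k ∩ D j).Nonempty → v ∈ D k)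
    (hclusters : ∀ j k : Fin n,
      ({a : Fin n | (D a ∩ D j).Nonempty} ≠ {a : Fin n | (D a ∩ D k).Nonempty}) →
      ∀ a, (D a ∩ D j).Nonempty → ∀ b, (D b ∩ D k).Nonempty → Disjoint (D a) (D b)) :
    ∀ t : ℕ, t = (Finset.univ.image
        (fun j : Fin n => Finset.univ.filter (fun a : Fin n => (D a ∩ D j).Nonempty))).card →
      ((∃ T : Finset (Option (Fin n)), T.card = t ∧
          ∀ a ∈ T, ∀ b ∈ T, a ≠ b →
            Disjoint (Option.elim a Cc D) (Option.elim b Cc D)) ∧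
        (∀ T : Finset (Option (Fin n)),
          (∀ a ∈ T, ∀ b ∈ T, a ≠ b →
            Disjoint (Option.elim a Cc D) (Option.elim b Cc D)) → T.card ≤ t)) ∧
      ((∃ S : Finset V, S.card = t ∧ ∀ j, (S ∩ D j).Nonempty) ∧
        (∀ S : Finset V, (∀ j, (S ∩ D j).Nonempty) → t ≤ S.card)) ∧
      (∃ S : Finset V, S.card ≤ t + 1 ∧ (S ∩ Cc).Nonempty ∧
        ∀ j, (S ∩ D j).Nonempty) := by
  intro t ht
  classical
  -- the cluster of j, as a finset
  let clF : Fin n → Finset (Fin n) :=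
    fun j => Finset.univ.filter (fun a : Fin n => (D a ∩ D j).Nonempty)
  have hF : t = (Finset.univ.image clF).card := ht
  have hself : ∀ j, j ∈ clF j := by
    intro j
    simp only [clF, Finset.mem_filter, Finset.mem_univ, true_and, Finset.inter_self]
    exact hne j
  have hdisj : ∀ j k : Fin n, clF j ≠ clF k → Disjoint (D j) (D k) := by
    intro j k h
    refine hclusters j k ?_ j (by simpa using hne j) k (by simpa using hne k)
    intro hs
    apply h
    ext a
    simp only [clF, Finset.mem_filter, Finset.mem_univ, true_and]
    exact Set.ext_iff.mp hs a
  have hcl_eq : ∀ j k : Fin n, clF j = clF k ↔ (D j ∩ D k).Nonempty := by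
    intro j k
    constructor
    · intro h
      have hk := hself k
      rw [← h] at hk
      simp only [clF, Finset.mem_filter, Finset.mem_univ, true_and] at hk
      rwa [Finset.inter_comm] at hk
    · intro h
      by_contra hne'
      obtain ⟨x, hx⟩ := h
      rw [Finset.mem_inter] at hx
      exact Finset.disjoint_left.mp (hdisj j k hne') hx.1 hx.2
  obtain ⟨v, hv1, hv2⟩ : ∃ v : Fin n → V, (∀ j, v j ∈ D j) ∧
      ∀ j k, (D k ∩ D j).Nonempty → v j ∈ D k := by
    choose v h1 h2 using hstar
    exact ⟨v, h1, h2⟩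
  -- representative chooser for clusters
  have hrep : ∀ C ∈ Finset.univ.image clF, ∃ j : Fin n, clF j = C := by
    intro C hC
    simpa using hC
  have _inst : Nonempty (Fin n) := ⟨⟨0, hn⟩⟩
  choose! g hg using hrep
  have hFne : (Finset.univ.image clF).Nonempty :=
    ⟨clF ⟨0, hn⟩, Finset.mem_image_of_mem _ (Finset.mem_univ _)⟩
  -- the hitting set of size t
  have hSex : ∃ S : Finset V, S.card = t ∧ ∀ j, (S ∩ D j).Nonempty := by
    refine ⟨(Finset.univ.image clF).image (fun C => v (g C)), ?_, ?_⟩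
    · rw [hF]
      apply Finset.card_image_of_injOn
      intro C hC C' hC' hvv
      replace hC := Finset.mem_coe.mp hC
      replace hC' := Finset.mem_coe.mp hC'
      have hvv' : v (g C) = v (g C') := hvv
      by_contra hCC
      have hne2 : clF (g C) ≠ clF (g C') := by
        rw [hg C hC, hg C' hC']; exact hCC
      exact Finset.disjoint_left.mp (hdisj _ _ hne2) (hv1 (g C))
        (by rw [hvv']; exact hv1 (g C'))
    · intro j
      have hCj : clF j ∈ Finset.univ.image clF :=
        Finset.mem_image_of_mem _ (Finset.mem_univ _)
      refine ⟨v (g (clF j)), Finset.mem_inter.mpr ⟨Finset.mem_image_of_mem _ hCj, ?_⟩⟩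
      apply hv2 (g (clF j)) j
      have : (D (g (clF j)) ∩ D j).Nonempty := (hcl_eq _ _).mp (hg _ hCj)
      rwa [Finset.inter_comm] at this
  refine ⟨⟨?_, ?_⟩, ⟨hSex, ?_⟩, ?_⟩
  · -- disjoint family of size t
    have hginj : Set.InjOn (fun C => (some (g C) : Option (Fin n)))
        (Finset.univ.image clF) := by
      intro C hC C' hC' hgg
      replace hC := Finset.mem_coe.mp hC
      replace hC' := Finset.mem_coe.mp hC'
      have h2 : g C = g C' := by simpa using hgg
      rw [← hg C hC, ← hg C' hC', h2]
    refine ⟨(Finset.univ.image clF).image (fun C => some (g C)), ?_, ?_⟩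
    · rw [Finset.card_image_of_injOn hginj, hF]
    · intro a ha b hb hab
      rw [Finset.mem_image] at ha hb
      obtain ⟨C, hC, rfl⟩ := ha
      obtain ⟨C', hC', rfl⟩ := hb
      have hne2 : clF (g C) ≠ clF (g C') := by
        rw [hg C hC, hg C' hC']
        intro h
        exact hab (by rw [h])
      exact hdisj _ _ hne2
  · -- maximality of disjoint family
    intro T hT
    by_cases hnone : none ∈ T
    · have hTsing : T = {none} := by
        ext a
        cases a with
        | none => simp [hnone]
        | some j =>
          simp only [Finset.mem_singleton]
          constructor
          · intro hj
            exfalso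
            have hd := hT none hnone (some j) hj (by simp)
            obtain ⟨x, hx⟩ := hCc j
            rw [Finset.mem_inter] at hx
            exact Finset.disjoint_left.mp hd hx.2 hx.1
          · intro h
            exact absurd h (by simp)
      rw [hTsing, Finset.card_singleton, hF]
      exact Finset.card_pos.mpr hFne
    · have hmaps : ∀ a ∈ T, clF (a.getD ⟨0, hn⟩) ∈ Finset.univ.image clF := by
        intro a _
        exact Finset.mem_image_of_mem _ (Finset.mem_univ _)
      rw [hF]
      apply Finset.card_le_card_of_injOn (s := T) (t := Finset.univ.image clF) (fun a => clF (a.getD ⟨0, hn⟩)) (fun a ha => hmaps a ha)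
      intro a ha b hb hab
      match a, b with
      | none, _ => exact absurd ha hnone
      | _, none => exact absurd hb hnone
      | some j, some k =>
        by_contra hjk
        have hjk' : j ≠ k := fun h => hjk (by rw [h])
        have hd := hT (some j) ha (some k) hb (by simpa using hjk')
        have hint : (D j ∩ D k).Nonempty := (hcl_eq j k).mp (by simpa using hab)
        obtain ⟨x, hx⟩ := hint
        rw [Finset.mem_inter] at hx
        exact Finset.disjoint_left.mp hd hx.1 hx.2
  · -- minimality of hitting set
    intro S hS
    rw [hF]
    have hsel : ∀ C ∈ Finset.univ.image clF, ∃ x, x ∈ S ∧ x ∈ D (g C) := by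
      intro C _
      obtain ⟨x, hx⟩ := hS (g C)
      exact ⟨x, Finset.mem_inter.mp hx⟩
    have _instV : Nonempty V := ⟨(hne ⟨0, hn⟩).choose⟩
    choose! s hs1 hs2 using hsel
    apply Finset.card_le_card_of_injOn s (fun C hC => hs1 C hC)
    intro C hC C' hC' hss
    replace hC := Finset.mem_coe.mp hC
    replace hC' := Finset.mem_coe.mp hC'
    by_contra hCC
    have hne2 : clF (g C) ≠ clF (g C') := by
      rw [hg C hC, hg C' hC']; exact hCC
    exact Finset.disjoint_left.mp (hdisj _ _ hne2) (hs2 C hC)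
      (by rw [hss]; exact hs2 C' hC')
  · -- hitting set for all of C, size ≤ t + 1
    obtain ⟨S, hScard, hShit⟩ := hSex
    obtain ⟨x, hx⟩ := hCc ⟨0, hn⟩
    rw [Finset.mem_inter] at hx
    refine ⟨insert x S, ?_, ⟨x, Finset.mem_inter.mpr ⟨Finset.mem_insert_self _ _, hx.2⟩⟩, ?_⟩
    · calc (insert x S).card ≤ S.card + 1 := Finset.card_insert_le _ _
        _ = t + 1 := by rw [hScard]
    · intro j
      obtain ⟨y, hy⟩ := hShit j
      rw [Finset.mem_inter] at hy
      exact ⟨y, Finset.mem_inter.mpr ⟨Finset.mem_insert_of_mem hy.1, hy.2⟩⟩
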